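/- S-procedure (complex case, single constraint): Let A, B be n×n Hermitian matrices, b, c ∈ ℂⁿ, and d, e ∈ ℝ. Suppose there exists x̄ with x̄^H A x̄ + 2Re(b^H x̄) + d < 0. Then the implication 'x^H A x + 2Re(b^H x) + d ≤ 0 ⟹ x^H B x + 2Re(c^H x) + e ≤ 0' holds for all x ∈ ℂⁿ if and only if there exists ω ≥ 0 such that the block matrix [[ωA - B, ωb - c], [(ωb - c)^H, ωd - e]] is positive semidefinite. -/

import Mathlib

open Matrix ComplexOrder

namespace SLemmaAux

variable {m : Type*} [Fintype m]

noncomputable def qf (M : Matrix m m ℂ) (y : m → ℂ) : ℝ := (star y ⬝ᵥ M *ᵥ y).re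

lemma herm_swap (M : Matrix m m ℂ) (hM : M.IsHermitian) (u v : m → ℂ) :
    star v ⬝ᵥ M *ᵥ u = starRingEnd ℂ (star u ⬝ᵥ M *ᵥ v) := by
  calc star v ⬝ᵥ M *ᵥ u = star v ⬝ᵥ Mᴴ *ᵥ u := by rw [hM.eq]
    _ = (star v ᵥ* Mᴴ) ⬝ᵥ u := dotProduct_mulVec _ _ _
    _ = star (M *ᵥ v) ⬝ᵥ u := by rw [star_mulVec]
    _ = star (star u ⬝ᵥ (M *ᵥ v)) := star_dotProduct _ _
    _ = starRingEnd ℂ (star u ⬝ᵥ M *ᵥ v) := rfl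

lemma qf_eq (M : Matrix m m ℂ) (hM : M.IsHermitian) (y : m → ℂ) :
    star y ⬝ᵥ M *ᵥ y = (qf M y : ℂ) := by
  have h := herm_swap M hM y y
  have : (starRingEnd ℂ) (star y ⬝ᵥ M *ᵥ y) = star y ⬝ᵥ M *ᵥ y := h.symm
  exact ((Complex.conj_eq_iff_re.mp this)).symm

lemma qf_combo (M : Matrix m m ℂ) (hM : M.IsHermitian) (a bz : ℂ) (y₁ y₂ : m → ℂ) :
    qf M (a • y₁ + bz • y₂) = Complex.normSq a * qf M y₁ + Complex.normSq bz * qf M y₂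
      + 2 * ((starRingEnd ℂ a) * bz * (star y₁ ⬝ᵥ M *ᵥ y₂)).re := by
  have h21 : star y₂ ⬝ᵥ M *ᵥ y₁ = starRingEnd ℂ (star y₁ ⬝ᵥ M *ᵥ y₂) := herm_swap M hM y₁ y₂
  have e1 := qf_eq M hM y₁
  have e2 := qf_eq M hM y₂
  unfold qf
  simp only [star_add, star_smul, mulVec_add, mulVec_smul,
    add_dotProduct, dotProduct_add, smul_dotProduct, dotProduct_smul]
  rw [h21, e1, e2]
  simp only [smul_eq_mul, Complex.star_def]
  simp only [Complex.add_re, Complex.add_im, Complex.mul_re, Complex.mul_im, Complex.conj_re,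
    Complex.conj_im, Complex.ofReal_re, Complex.ofReal_im, Complex.normSq_apply]
  ring

lemma qf_add (M N : Matrix m m ℂ) (y : m → ℂ) : qf (M + N) y = qf M y + qf N y := by
  unfold qf
  rw [add_mulVec, dotProduct_add, Complex.add_re]

lemma rsmul_mulVec (r : ℝ) (M : Matrix m m ℂ) (y : m → ℂ) :
    (r • M) *ᵥ y = (r : ℂ) • (M *ᵥ y) := by
  rw [show r • M = (r : ℂ) • M from by ext i j; simp [Complex.real_smul], smul_mulVec]

lemma qf_rsmul (r : ℝ) (M : Matrix m m ℂ) (y : m → ℂ) : qf (r • M) y = r * qf M y := by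
  unfold qf
  rw [rsmul_mulVec, dotProduct_smul, smul_eq_mul, Complex.re_ofReal_mul]

lemma qf_sub (M N : Matrix m m ℂ) (y : m → ℂ) : qf (M - N) y = qf M y - qf N y := by
  unfold qf
  rw [sub_mulVec, dotProduct_sub, Complex.sub_re]

lemma qf_csmul (t : ℂ) (M : Matrix m m ℂ) (y : m → ℂ) :
    qf M (t • y) = Complex.normSq t * qf M y := by
  unfold qf
  rw [star_smul, mulVec_smul, smul_dotProduct, dotProduct_smul]
  simp only [smul_eq_mul, Complex.star_def]
  simp only [Complex.mul_re, Complex.mul_im, Complex.conj_re, Complex.conj_im,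
    Complex.normSq_apply]
  ring

lemma qf_zero (M : Matrix m m ℂ) : qf M (0 : m → ℂ) = 0 := by
  unfold qf
  simp

lemma herm_rsmul (r : ℝ) (M : Matrix m m ℂ) (h : M.IsHermitian) : (r • M).IsHermitian := by
  have : (r • M)ᴴ = star r • Mᴴ := conjTranspose_smul r M
  rw [Matrix.IsHermitian, this, star_trivial, h.eq]

set_option maxHeartbeats 2000000 in
lemma convex_range (𝔸 𝔹 : Matrix m m ℂ) (hA : 𝔸.IsHermitian) (hB : 𝔹.IsHermitian) :
    Convex ℝ (Set.range fun y : m → ℂ => ((qf 𝔸 y, qf 𝔹 y) : ℝ × ℝ)) := by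
  rintro p₁ ⟨y₁, rfl⟩ p₂ ⟨y₂, rfl⟩ lam mu hlam hmu hlm
  simp only
  by_cases hp : ((qf 𝔸 y₁, qf 𝔹 y₁) : ℝ × ℝ) = (qf 𝔸 y₂, qf 𝔹 y₂)
  · refine ⟨y₂, ?_⟩
    simp only [hp, ← add_smul, hlm, one_smul]
  · set d1 : ℝ := qf 𝔸 y₂ - qf 𝔸 y₁ with hd1
    set d2 : ℝ := qf 𝔹 y₂ - qf 𝔹 y₁ with hd2
    have hd : d1 ≠ 0 ∨ d2 ≠ 0 := by
      by_contra hcon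
      push_neg at hcon
      exact hp (by ext <;> simp <;> [linarith [hcon.1]; linarith [hcon.2]])
    have hdd : 0 < d1 ^ 2 + d2 ^ 2 := by
      rcases hd with h | h <;> positivity
    set M' : Matrix m m ℂ := (-d2) • 𝔸 + d1 • 𝔹 with hM'
    have hM'h : M'.IsHermitian :=
      (herm_rsmul (-d2) 𝔸 hA).add (herm_rsmul d1 𝔹 hB)
    have hqM' : ∀ y, qf M' y = -d2 * qf 𝔸 y + d1 * qf 𝔹 y := fun y => by
      rw [hM', qf_add, qf_rsmul, qf_rsmul]
    set w' : ℂ := star y₁ ⬝ᵥ M' *ᵥ y₂ with hw'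
    set ζ : ℂ := if w' = 0 then 1 else Complex.I * (starRingEnd ℂ) w' / ((‖w'‖ : ℝ) : ℂ)
      with hζdef
    have hζ1 : Complex.normSq ζ = 1 := by
      rw [hζdef]
      split_ifs with h
      · simp
      · rw [Complex.normSq_div, Complex.normSq_mul, Complex.normSq_conj, Complex.normSq_I,
          one_mul, Complex.normSq_ofReal]
        rw [← sq, ← Complex.normSq_eq_norm_sq]
        exact div_self (by simp [Complex.normSq_eq_zero, h])
    have hζ2 : (ζ * w').re = 0 := by
      rw [hζdef]
      split_ifs with h
      · simp [h]
      · have : Complex.I * (starRingEnd ℂ) w' / ((‖w'‖ : ℝ) : ℂ) * w'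
            = Complex.I * ((Complex.normSq w' / ‖w'‖ : ℝ) : ℂ) := by
          push_cast
          rw [div_mul_eq_mul_div, mul_assoc, mul_comm ((starRingEnd ℂ) w') w',
            Complex.mul_conj, mul_div_assoc]
        rw [this]
        simp
    set pth : ℝ → (m → ℂ) := fun t =>
      ((Real.cos t : ℝ) : ℂ) • y₁ + (((Real.sin t : ℝ) : ℂ) * ζ) • y₂ with hpth
    have hcombo : ∀ (M : Matrix m m ℂ), M.IsHermitian → ∀ t : ℝ,
        qf M (pth t) = Real.cos t ^ 2 * qf M y₁ + Real.sin t ^ 2 * qf M y₂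
          + 2 * (Real.cos t * Real.sin t * (ζ * (star y₁ ⬝ᵥ M *ᵥ y₂)).re) := by
      intro M hM t
      rw [hpth]
      rw [qf_combo M hM _ _ y₁ y₂]
      have h1 : (starRingEnd ℂ) ((Real.cos t : ℝ) : ℂ) * (((Real.sin t : ℝ) : ℂ) * ζ)
          * (star y₁ ⬝ᵥ M *ᵥ y₂)
          = ((Real.cos t : ℝ) : ℂ) * (((Real.sin t : ℝ) : ℂ) * (ζ * (star y₁ ⬝ᵥ M *ᵥ y₂))) := by
        rw [Complex.conj_ofReal]; ring
      rw [h1, Complex.normSq_mul, Complex.normSq_ofReal, Complex.normSq_ofReal, hζ1,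
        Complex.re_ofReal_mul, Complex.re_ofReal_mul]
      ring
    set cA : ℝ := (ζ * (star y₁ ⬝ᵥ 𝔸 *ᵥ y₂)).re with hcA
    set cB : ℝ := (ζ * (star y₁ ⬝ᵥ 𝔹 *ᵥ y₂)).re with hcB
    set gA : ℝ → ℝ := fun t => Real.cos t ^ 2 * qf 𝔸 y₁ + Real.sin t ^ 2 * qf 𝔸 y₂
      + 2 * (Real.cos t * Real.sin t * cA) with hgA
    set gB : ℝ → ℝ := fun t => Real.cos t ^ 2 * qf 𝔹 y₁ + Real.sin t ^ 2 * qf 𝔹 y₂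
      + 2 * (Real.cos t * Real.sin t * cB) with hgB
    have hgAeq : ∀ t, qf 𝔸 (pth t) = gA t := fun t => hcombo 𝔸 hA t
    have hgBeq : ∀ t, qf 𝔹 (pth t) = gB t := fun t => hcombo 𝔹 hB t
    -- constancy along the path
    have hwdecomp : w' = ((-d2 : ℝ) : ℂ) * (star y₁ ⬝ᵥ 𝔸 *ᵥ y₂)
        + ((d1 : ℝ) : ℂ) * (star y₁ ⬝ᵥ 𝔹 *ᵥ y₂) := by
      rw [hw', hM', add_mulVec, dotProduct_add, rsmul_mulVec, rsmul_mulVec,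
        dotProduct_smul, dotProduct_smul, smul_eq_mul, smul_eq_mul]
    have hs12 : qf M' y₁ = qf M' y₂ := by
      rw [hqM', hqM', hd1, hd2]; ring
    have h0 : (ζ * (star y₁ ⬝ᵥ M' *ᵥ y₂)).re = 0 := by rw [← hw']; exact hζ2
    have hconstM : ∀ t, qf M' (pth t) = qf M' y₁ := by
      intro t
      rw [hcombo M' hM'h t, h0, ← hs12]
      linear_combination (qf M' y₁) * (Real.cos_sq_add_sin_sq t)
    have hconst : ∀ t, -d2 * gA t + d1 * gB t = -d2 * qf 𝔸 y₁ + d1 * qf 𝔹 y₁ := by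
      intro t
      have h1 := hconstM t
      rw [hqM' (pth t), hqM' y₁, hgAeq t, hgBeq t] at h1
      exact h1
    set ρ : ℝ → ℝ := fun t => ((gA t - qf 𝔸 y₁) * d1 + (gB t - qf 𝔹 y₁) * d2)
      * (d1 ^ 2 + d2 ^ 2)⁻¹ with hρdef
    have hcont : Continuous ρ := by
      rw [hρdef, hgA, hgB]
      beta_reduce
      fun_prop
    have hgA0 : gA 0 = qf 𝔸 y₁ := by rw [hgA]; simp
    have hgB0 : gB 0 = qf 𝔹 y₁ := by rw [hgB]; simp
    have hgA1 : gA (Real.pi / 2) = qf 𝔸 y₂ := by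
      rw [hgA]; simp [Real.cos_pi_div_two, Real.sin_pi_div_two]
    have hgB1 : gB (Real.pi / 2) = qf 𝔹 y₂ := by
      rw [hgB]; simp [Real.cos_pi_div_two, Real.sin_pi_div_two]
    have hρ0 : ρ 0 = 0 := by
      rw [hρdef]; simp only [hgA0, hgB0]; ring
    have hρ1 : ρ (Real.pi / 2) = 1 := by
      rw [hρdef]; simp only [hgA1, hgB1, ← hd1, ← hd2]
      field_simp
    have h01 : mu ∈ Set.Icc (ρ 0) (ρ (Real.pi / 2)) := by
      rw [hρ0, hρ1]; exact ⟨hmu, by linarith⟩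
    obtain ⟨t, -, hρt⟩ := intermediate_value_Icc
      (by linarith [Real.pi_pos] : (0:ℝ) ≤ Real.pi / 2) hcont.continuousOn h01
    rw [hρdef] at hρt
    simp only at hρt
    have hnum : (gA t - qf 𝔸 y₁) * d1 + (gB t - qf 𝔹 y₁) * d2 = mu * (d1 ^ 2 + d2 ^ 2) := by
      field_simp at hρt
      linarith [hρt]
    have hperp : d1 * (gB t - qf 𝔹 y₁) = d2 * (gA t - qf 𝔸 y₁) := by
      have h1 := hconst t
      nlinarith [h1]
    have e1 : (gA t - qf 𝔸 y₁) * (d1 ^ 2 + d2 ^ 2) = mu * d1 * (d1 ^ 2 + d2 ^ 2) := by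
      linear_combination d1 * hnum - d2 * hperp
    have e2 : (gB t - qf 𝔹 y₁) * (d1 ^ 2 + d2 ^ 2) = mu * d2 * (d1 ^ 2 + d2 ^ 2) := by
      linear_combination d2 * hnum + d1 * hperp
    have hA1 : gA t - qf 𝔸 y₁ = mu * d1 := mul_right_cancel₀ hdd.ne' e1
    have hB1 : gB t - qf 𝔹 y₁ = mu * d2 := mul_right_cancel₀ hdd.ne' e2
    rw [hd1] at hA1
    rw [hd2] at hB1
    have c1 : gA t = lam * qf 𝔸 y₁ + mu * qf 𝔸 y₂ := by
      linear_combination hA1 + (- qf 𝔸 y₁) * hlm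
    have c2 : gB t = lam * qf 𝔹 y₁ + mu * qf 𝔹 y₂ := by
      linear_combination hB1 + (- qf 𝔹 y₁) * hlm
    refine ⟨pth t, ?_⟩
    show (qf 𝔸 (pth t), qf 𝔹 (pth t)) = _
    rw [hgAeq t, hgBeq t]
    simp only [Prod.smul_mk, Prod.mk_add_mk, smul_eq_mul, Prod.mk.injEq]
    exact ⟨c1, c2⟩

set_option maxHeartbeats 800000 in
lemma slemma2d (𝔸 𝔹 : Matrix m m ℂ) (hA : 𝔸.IsHermitian) (hB : 𝔹.IsHermitian)
    (himp : ∀ y : m → ℂ, qf 𝔸 y < 0 → qf 𝔹 y ≤ 0) (hsl : ∃ y : m → ℂ, qf 𝔸 y < 0) :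
    ∃ ω : ℝ, 0 ≤ ω ∧ ∀ y : m → ℂ, 0 ≤ ω * qf 𝔸 y - qf 𝔹 y := by
  set W : Set (ℝ × ℝ) := Set.range fun y : m → ℂ => ((qf 𝔸 y, qf 𝔹 y) : ℝ × ℝ) with hW
  set K : Set (ℝ × ℝ) := Set.Iio (0:ℝ) ×ˢ Set.Ioi (0:ℝ) with hK
  have hKopen : IsOpen K := isOpen_Iio.prod isOpen_Ioi
  have hKconv : Convex ℝ K := (convex_Iio _).prod (convex_Ioi _)
  have hWconv : Convex ℝ W := convex_range 𝔸 𝔹 hA hB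
  have hdisj : Disjoint K W := by
    rw [Set.disjoint_left]
    intro p hpK hpW
    obtain ⟨y, hy⟩ := hpW
    rw [← hy] at hpK
    simp only [Set.mem_prod, Set.mem_Iio, Set.mem_Ioi] at hpK
    exact absurd (himp y hpK.1) (not_le.mpr hpK.2)
  obtain ⟨f, u, hfK, hfW⟩ := geometric_hahn_banach_open hKconv hKopen hWconv hdisj
  set α : ℝ := f ((1:ℝ), (0:ℝ)) with hαdef
  set β : ℝ := f ((0:ℝ), (1:ℝ)) with hβdef
  have hflin : ∀ p : ℝ × ℝ, f p = p.1 * α + p.2 * β := by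
    intro p
    have hp : p = p.1 • ((1:ℝ),(0:ℝ)) + p.2 • ((0:ℝ),(1:ℝ)) := by
      ext <;> simp
    calc f p = f (p.1 • ((1:ℝ),(0:ℝ)) + p.2 • ((0:ℝ),(1:ℝ))) := by rw [← hp]
      _ = p.1 * α + p.2 * β := by
          rw [map_add, f.map_smul, f.map_smul, smul_eq_mul, smul_eq_mul]
  have hαβK : ∀ v1 v2 : ℝ, v1 < 0 → 0 < v2 → v1 * α + v2 * β < u := by
    intro v1 v2 h1 h2
    have hm : ((v1, v2) : ℝ × ℝ) ∈ K := by
      simp only [hK, Set.mem_prod, Set.mem_Iio, Set.mem_Ioi]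
      exact ⟨h1, h2⟩
    have := hfK _ hm
    rwa [hflin] at this
  have h0W : ((0:ℝ), (0:ℝ)) ∈ W := ⟨0, by simp [qf_zero]⟩
  have hu0 : u ≤ 0 := by
    have := hfW _ h0W
    rwa [show ((0:ℝ),(0:ℝ)) = (0 : ℝ × ℝ) from rfl, map_zero] at this
  have hα : 0 ≤ α := by
    by_contra hcon
    push_neg at hcon
    set v := max 1 ((u - β + 1) / (-α)) with hv
    have hvpos : (0:ℝ) < v := lt_of_lt_of_le one_pos (le_max_left _ _)
    have h2 : (u - β + 1) / (-α) ≤ v := le_max_right _ _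
    have h3 : u - β + 1 ≤ v * (-α) := by
      rw [div_le_iff₀ (by linarith : (0:ℝ) < -α)] at h2
      linarith
    have h4 := hαβK (-v) 1 (by linarith) one_pos
    nlinarith
  have hβ : β ≤ 0 := by
    by_contra hcon
    push_neg at hcon
    set v := max 1 ((u + α + 1) / β) with hv
    have hvpos : (0:ℝ) < v := lt_of_lt_of_le one_pos (le_max_left _ _)
    have h2 : (u + α + 1) / β ≤ v := le_max_right _ _
    have h3 : u + α + 1 ≤ v * β := by
      rw [div_le_iff₀ hcon] at h2
      linarith
    have h4 := hαβK (-1) v (by norm_num) hvpos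
    nlinarith
  have hu0' : 0 ≤ u := by
    by_contra hcon
    push_neg at hcon
    rcases eq_or_lt_of_le (sub_nonpos.mpr (hβ.trans hα)) with heq | hlt
    · have h4 := hαβK (-1) 1 (by norm_num) one_pos
      nlinarith
    · set ε := u / (2 * (β - α)) with hε
      have hεpos : 0 < ε := div_pos_of_neg_of_neg hcon (by linarith)
      have hne : β - α ≠ 0 := by linarith
      have h4 := hαβK (-ε) ε (by linarith) hεpos
      have h6 : -ε * α + ε * β = ε * (β - α) := by ring
      have h5 : ε * (β - α) = u / 2 := by
        rw [hε]
        field_simp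
      rw [h6, h5] at h4
      linarith
  have hu : u = 0 := le_antisymm hu0 hu0'
  have key : ∀ y : m → ℂ, 0 ≤ α * qf 𝔸 y + β * qf 𝔹 y := by
    intro y
    have := hfW _ ⟨y, rfl⟩
    rw [hflin] at this
    simp only at this
    rw [hu] at this
    linarith
  by_cases hβ0 : β = 0
  · exfalso
    have hαpos : 0 < α := by
      have h4 := hαβK (-1) 1 (by norm_num) one_pos
      rw [hu] at h4
      nlinarith
    obtain ⟨y0, hy0⟩ := hsl
    have hk := key y0
    rw [hβ0] at hk
    nlinarith
  · have hβneg : β < 0 := lt_of_le_of_ne hβ hβ0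
    refine ⟨α / (-β), div_nonneg hα (by linarith), fun y => ?_⟩
    have hk := key y
    have heq : α / (-β) * qf 𝔸 y - qf 𝔹 y = (α * qf 𝔸 y + β * qf 𝔹 y) / (-β) := by
      field_simp [hβ0]
      ring
    rw [heq]
    exact div_nonneg hk (by linarith)

end SLemmaAux

section Blocks

open SLemmaAux

variable {n : ℕ}

noncomputable def blockM (A : Matrix (Fin n) (Fin n) ℂ) (b : Fin n → ℂ) (d : ℝ) :
    Matrix (Fin n ⊕ Fin 1) (Fin n ⊕ Fin 1) ℂ :=
  Matrix.fromBlocks A (Matrix.replicateCol (Fin 1) b) (Matrix.replicateRow (Fin 1) (star b))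
    (Matrix.of fun _ _ => (d : ℂ))

lemma blockM_herm (A : Matrix (Fin n) (Fin n) ℂ) (hA : A.IsHermitian) (b : Fin n → ℂ) (d : ℝ) :
    (blockM A b d).IsHermitian := by
  have hd : (Matrix.of fun _ _ : Fin 1 => (d:ℂ))ᴴ = Matrix.of fun _ _ : Fin 1 => (d:ℂ) := by
    ext i j
    exact Complex.conj_ofReal d
  rw [Matrix.IsHermitian, blockM, Matrix.fromBlocks_conjTranspose, Matrix.conjTranspose_replicateCol,
    Matrix.conjTranspose_replicateRow, star_star, hA.eq, hd]

lemma star_sum_elim (x : Fin n → ℂ) (t : ℂ) :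
    star (Sum.elim x (fun _ : Fin 1 => t)) = Sum.elim (star x) (fun _ : Fin 1 => star t) := by
  funext i
  cases i <;> rfl

lemma qf_blockM (A : Matrix (Fin n) (Fin n) ℂ) (b : Fin n → ℂ) (d : ℝ) (x : Fin n → ℂ) :
    qf (blockM A b d) (Sum.elim x (fun _ : Fin 1 => 1))
      = (star x ⬝ᵥ A *ᵥ x).re + 2 * (star b ⬝ᵥ x).re + d := by
  unfold qf blockM
  rw [star_sum_elim, Matrix.fromBlocks_mulVec]
  simp only [Sum.elim_comp_inl, Sum.elim_comp_inr]
  rw [sumElim_dotProduct_sumElim]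
  have h1 : Matrix.replicateCol (Fin 1) b *ᵥ (fun _ : Fin 1 => (1:ℂ)) = b := by
    funext i
    simp [Matrix.mulVec, dotProduct, Matrix.replicateCol]
  have h2 : Matrix.replicateRow (Fin 1) (star b) *ᵥ x = fun _ : Fin 1 => star b ⬝ᵥ x := by
    funext i
    simp [Matrix.mulVec, dotProduct, Matrix.replicateRow]
  have h3 : (Matrix.of fun _ _ : Fin 1 => (d:ℂ)) *ᵥ (fun _ : Fin 1 => (1:ℂ))
      = fun _ : Fin 1 => (d:ℂ) := by
    funext i
    simp [Matrix.mulVec, dotProduct]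
  rw [h1, h2, h3, dotProduct_add, dotProduct_add]
  have h4 : (fun _ : Fin 1 => star (1:ℂ)) ⬝ᵥ (fun _ : Fin 1 => star b ⬝ᵥ x)
      = star b ⬝ᵥ x := by
    simp [dotProduct]
  have h5 : (fun _ : Fin 1 => star (1:ℂ)) ⬝ᵥ (fun _ : Fin 1 => (d:ℂ)) = (d:ℂ) := by
    simp [dotProduct]
  rw [h4, h5]
  have h6 : star x ⬝ᵥ b = star (star b ⬝ᵥ x) := by
    rw [star_dotProduct]
  rw [h6]
  simp only [Complex.add_re, Complex.ofReal_re]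
  rw [show (star (star b ⬝ᵥ x)).re = (star b ⬝ᵥ x).re from rfl]
  ring

lemma qf_blockM0 (A : Matrix (Fin n) (Fin n) ℂ) (b : Fin n → ℂ) (d : ℝ) (z : Fin n → ℂ) :
    qf (blockM A b d) (Sum.elim z (fun _ : Fin 1 => 0))
      = (star z ⬝ᵥ A *ᵥ z).re := by
  unfold qf blockM
  rw [star_sum_elim, Matrix.fromBlocks_mulVec]
  simp only [Sum.elim_comp_inl, Sum.elim_comp_inr]
  rw [sumElim_dotProduct_sumElim]
  have h1 : Matrix.replicateCol (Fin 1) b *ᵥ (fun _ : Fin 1 => (0:ℂ)) = 0 := by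
    funext i
    simp [Matrix.mulVec, dotProduct, Matrix.replicateCol]
  have h3 : (Matrix.of fun _ _ : Fin 1 => (d:ℂ)) *ᵥ (fun _ : Fin 1 => (0:ℂ)) = 0 := by
    funext i
    simp [Matrix.mulVec, dotProduct]
  rw [h1, h3, add_zero, add_zero]
  have h4 : (fun _ : Fin 1 => star (0:ℂ)) ⬝ᵥ
      (Matrix.replicateRow (Fin 1) (star b) *ᵥ z) = 0 := by
    simp [dotProduct]
  rw [h4, add_zero]

lemma blockM_diff (A B : Matrix (Fin n) (Fin n) ℂ) (b c : Fin n → ℂ) (d e : ℝ) (ω : ℝ) :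
    (Matrix.fromBlocks (ω • A - B)
      (Matrix.replicateCol (Fin 1) (ω • b - c))
      (Matrix.replicateRow (Fin 1) (star (ω • b - c)))
      (Matrix.of fun _ _ => ((ω * d - e : ℝ) : ℂ)))
      = ω • blockM A b d - blockM B c e := by
  ext i j
  rcases i with i | i <;> rcases j with j | j <;>
    simp [blockM, Matrix.fromBlocks, Matrix.replicateCol, Matrix.replicateRow, Matrix.sub_apply,
      Matrix.smul_apply, Pi.smul_apply, Pi.sub_apply, Pi.star_apply, star_sub, star_smul,
      Complex.real_smul, Complex.ofReal_sub, Complex.ofReal_mul]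

end Blocks

set_option maxHeartbeats 1000000 in
open SLemmaAux in
open Matrix ComplexOrder in
theorem stmt_5 {n : ℕ} (A B : Matrix (Fin n) (Fin n) ℂ)
    (hA : A.IsHermitian) (hB : B.IsHermitian)
    (b c : Fin n → ℂ) (d e : ℝ)
    (hSlater : ∃ x : Fin n → ℂ,
      (star x ⬝ᵥ A *ᵥ x).re + 2 * (star b ⬝ᵥ x).re + d < 0) :
    (∀ x : Fin n → ℂ,
        (star x ⬝ᵥ A *ᵥ x).re + 2 * (star b ⬝ᵥ x).re + d ≤ 0 →
        (star x ⬝ᵥ B *ᵥ x).re + 2 * (star c ⬝ᵥ x).re + e ≤ 0) ↔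
      ∃ ω : ℝ, 0 ≤ ω ∧
        (Matrix.fromBlocks (ω • A - B)
          (Matrix.replicateCol (Fin 1) (ω • b - c))
          (Matrix.replicateRow (Fin 1) (star (ω • b - c)))
          (Matrix.of fun _ _ => ((ω * d - e : ℝ) : ℂ))).PosSemidef := by
  classical
  set 𝔸 := blockM A b d with h𝔸
  set 𝔹 := blockM B c e with h𝔹
  have h𝔸h : 𝔸.IsHermitian := blockM_herm A hA b d
  have h𝔹h : 𝔹.IsHermitian := blockM_herm B hB c e
  constructor
  · intro P
    have himp : ∀ y : (Fin n ⊕ Fin 1) → ℂ, qf 𝔸 y < 0 → qf 𝔹 y ≤ 0 := by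
      intro y hy
      set z : Fin n → ℂ := y ∘ Sum.inl with hz
      set t : ℂ := y (Sum.inr 0) with htdef
      have hyel : y = Sum.elim z (fun _ : Fin 1 => t) := by
        funext i
        cases i with
        | inl i => rfl
        | inr j =>
          have hj : j = 0 := Subsingleton.elim _ _
          rw [hj]
          rfl
      rw [hyel] at hy ⊢
      by_cases ht : t = 0
      · rw [ht] at hy ⊢
        rw [h𝔸, qf_blockM0] at hy
        rw [h𝔹, qf_blockM0]
        by_contra hb
        push_neg at hb
        set a : ℝ := (star z ⬝ᵥ A *ᵥ z).re with ha
        set p : ℝ := (star z ⬝ᵥ B *ᵥ z).re with hp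
        set β₁ : ℝ := (star b ⬝ᵥ z).re with hβ₁
        set β₂ : ℝ := (star c ⬝ᵥ z).re with hβ₂
        set s : ℝ := max 1 (max ((2*|β₁| + |d| + 1)/(-a)) ((2*|β₂| + |e| + 1)/p)) with hs
        have hs1 : (1:ℝ) ≤ s := le_max_left _ _
        have hspos : (0:ℝ) < s := lt_of_lt_of_le one_pos hs1
        have hsA : (2*|β₁| + |d| + 1)/(-a) ≤ s := le_trans (le_max_left _ _) (le_max_right _ _)
        have hsB : (2*|β₂| + |e| + 1)/p ≤ s := le_trans (le_max_right _ _) (le_max_right _ _)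
        have hsA' : 2*|β₁| + |d| + 1 ≤ s * (-a) := by
          rw [div_le_iff₀ (by linarith : (0:ℝ) < -a)] at hsA
          linarith
        have hsB' : 2*|β₂| + |e| + 1 ≤ s * p := by
          rw [div_le_iff₀ hb] at hsB
          linarith
        have hqa : (star ((s:ℂ) • z) ⬝ᵥ A *ᵥ ((s:ℂ) • z)).re = s^2 * a := by
          have h := qf_csmul (s:ℂ) A z
          rw [Complex.normSq_ofReal] at h
          rw [show (star ((s:ℂ) • z) ⬝ᵥ A *ᵥ ((s:ℂ) • z)).re = qf A ((s:ℂ)•z) from rfl, h]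
          rw [show qf A z = a from rfl]
          ring
        have hqb : (star ((s:ℂ) • z) ⬝ᵥ B *ᵥ ((s:ℂ) • z)).re = s^2 * p := by
          have h := qf_csmul (s:ℂ) B z
          rw [Complex.normSq_ofReal] at h
          rw [show (star ((s:ℂ) • z) ⬝ᵥ B *ᵥ ((s:ℂ) • z)).re = qf B ((s:ℂ)•z) from rfl, h]
          rw [show qf B z = p from rfl]
          ring
        have hdb : (star b ⬝ᵥ ((s:ℂ) • z)).re = s * β₁ := by
          rw [dotProduct_smul, smul_eq_mul, Complex.re_ofReal_mul]
        have hdc : (star c ⬝ᵥ ((s:ℂ) • z)).re = s * β₂ := by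
          rw [dotProduct_smul, smul_eq_mul, Complex.re_ofReal_mul]
        have hgP : (star ((s:ℂ)•z) ⬝ᵥ A *ᵥ ((s:ℂ)•z)).re + 2*(star b ⬝ᵥ ((s:ℂ)•z)).re + d ≤ 0 := by
          rw [hqa, hdb]
          have k1 : 2*s*β₁ ≤ 2*s*|β₁| := by
            have := le_abs_self β₁
            nlinarith
          have k2 : d ≤ s * |d| := by
            have h1 := le_abs_self d
            have h2 := abs_nonneg d
            nlinarith
          nlinarith
        have hhP := P ((s:ℂ) • z) hgP
        rw [hqb, hdc] at hhP
        have k1 : -(2*s*|β₂|) ≤ 2*s*β₂ := by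
          have := neg_abs_le β₂
          nlinarith
        have k2 : -(s*|e|) ≤ e := by
          have h1 := neg_abs_le e
          have h2 := abs_nonneg e
          nlinarith
        nlinarith
      · have hel : Sum.elim z (fun _ : Fin 1 => t)
            = t • Sum.elim (t⁻¹ • z) (fun _ : Fin 1 => (1:ℂ)) := by
          funext i
          cases i with
          | inl i =>
            show z i = t * (t⁻¹ * z i)
            rw [← mul_assoc, mul_inv_cancel₀ ht, one_mul]
          | inr j =>
            show t = t * 1
            rw [mul_one]
        rw [hel, qf_csmul] at hy ⊢
        have hnt : 0 < Complex.normSq t := Complex.normSq_pos.mpr ht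
        rw [h𝔸, qf_blockM] at hy
        rw [h𝔹, qf_blockM]
        have hglt : (star (t⁻¹ • z) ⬝ᵥ A *ᵥ (t⁻¹ • z)).re
            + 2 * (star b ⬝ᵥ (t⁻¹ • z)).re + d < 0 := by
          nlinarith
        have happ := P (t⁻¹ • z) (le_of_lt hglt)
        nlinarith
    obtain ⟨x₀, hx₀⟩ := hSlater
    have hsl : ∃ y : (Fin n ⊕ Fin 1) → ℂ, qf 𝔸 y < 0 := by
      refine ⟨Sum.elim x₀ (fun _ : Fin 1 => 1), ?_⟩
      rw [h𝔸, qf_blockM]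
      exact hx₀
    obtain ⟨ω, hω, hkey⟩ := slemma2d 𝔸 𝔹 h𝔸h h𝔹h himp hsl
    refine ⟨ω, hω, ?_⟩
    rw [blockM_diff A B b c d e ω, ← h𝔸, ← h𝔹]
    have hermE : (ω • 𝔸 - 𝔹).IsHermitian := (herm_rsmul ω 𝔸 h𝔸h).sub h𝔹h
    refine Matrix.posSemidef_iff_dotProduct_mulVec.mpr ⟨hermE, fun y => ?_⟩
    rw [qf_eq _ hermE y, Complex.zero_le_real, qf_sub, qf_rsmul]
    exact hkey y
  · rintro ⟨ω, hω, hpsd⟩ x hx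
    rw [blockM_diff A B b c d e ω, ← h𝔸, ← h𝔹] at hpsd
    have h2 := (Matrix.posSemidef_iff_dotProduct_mulVec.mp hpsd).2 (Sum.elim x (fun _ : Fin 1 => 1))
    have h3 := (Complex.le_def.mp h2).1
    rw [Complex.zero_re] at h3
    have h4 : (0:ℝ) ≤ qf (ω • 𝔸 - 𝔹) (Sum.elim x fun _ : Fin 1 => 1) := h3
    rw [qf_sub, qf_rsmul, h𝔸, h𝔹, qf_blockM, qf_blockM] at h4
    nlinarith [mul_nonneg hω (neg_nonneg.mpr hx)]
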